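/- Let d be a natural number, let M and K be skew-symmetric real d×d matrices, let S : ℝ^d → ℝ be continuously differentiable, and let z : ℝ × ℝ → ℝ^d be twice continuously differentiable and satisfy the multi-symplectic equation M z_t + K z_x = ∇S(z) on an open set U ⊆ ℝ × ℝ (subscripts t and x denote partial derivatives in the first and second argument respectively). Define the density functions E(x,t) = S(z(x,t)) + (1/2)⟨z_x(x,t), K z(x,t)⟩ and F(x,t) = −(1/2)⟨z_t(x,t), K z(x,t)⟩. Then the local energy conservation law ∂_t E + ∂_x F = 0 holds at every point of U. -/

import Mathlib

open Matrix

/-- Partial derivative with respect to the first argument (time). -/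
noncomputable def pt {E : Type*} [NormedAddCommGroup E] [NormedSpace ℝ E]
    (z : ℝ × ℝ → E) (p : ℝ × ℝ) : E :=
  deriv (fun s => z (s, p.2)) p.1

/-- Partial derivative with respect to the second argument (space). -/
noncomputable def px {E : Type*} [NormedAddCommGroup E] [NormedSpace ℝ E]
    (z : ℝ × ℝ → E) (p : ℝ × ℝ) : E :=
  deriv (fun s => z (p.1, s)) p.2

-- skew inner lemma
lemma skew_inner {d : ℕ} {A : Matrix (Fin d) (Fin d) ℝ} (hA : Aᵀ = -A)
    (u v : EuclideanSpace ℝ (Fin d)) :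
    (inner ℝ (Matrix.toEuclideanLin A u) v : ℝ) = -(inner ℝ u (Matrix.toEuclideanLin A v) : ℝ) := by
  have hc : Aᴴ = Aᵀ := by
    ext i j
    simp [Matrix.conjTranspose]
  have h1 : Matrix.toEuclideanLin Aᵀ = LinearMap.adjoint (Matrix.toEuclideanLin A) := by
    rw [← Matrix.toEuclideanLin_conjTranspose_eq_adjoint, hc]
  have h2 : (inner ℝ u (Matrix.toEuclideanLin Aᵀ v) : ℝ)
      = (inner ℝ (Matrix.toEuclideanLin A u) v : ℝ) := by
    rw [h1, LinearMap.adjoint_inner_right]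
  rw [← h2, hA]
  simp

/-- Local energy conservation law for a multi-symplectic PDE `M z_t + K z_x = ∇S(z)`:
`∂_t E + ∂_x F = 0` on `U`, with `E = S(z) + ½⟨z_x, K z⟩` and `F = −½⟨z_t, K z⟩`. -/
theorem stmt_0 (d : ℕ) (M K : Matrix (Fin d) (Fin d) ℝ)
    (hM : Mᵀ = -M) (hK : Kᵀ = -K)
    (S : EuclideanSpace ℝ (Fin d) → ℝ) (hS : ContDiff ℝ 1 S)
    (U : Set (ℝ × ℝ)) (hU : IsOpen U)
    (z : ℝ × ℝ → EuclideanSpace ℝ (Fin d)) (hz : ContDiffOn ℝ 2 z U)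
    (heq : ∀ p ∈ U,
      Matrix.toEuclideanLin M (pt z p) + Matrix.toEuclideanLin K (px z p)
        = gradient S (z p))
    (E F : ℝ × ℝ → ℝ)
    (hE : ∀ p, E p = S (z p)
      + (1 / 2) * (inner ℝ (px z p) (Matrix.toEuclideanLin K (z p)) : ℝ))
    (hF : ∀ p, F p = -(1 / 2) * (inner ℝ (pt z p) (Matrix.toEuclideanLin K (z p)) : ℝ)) :
    ∀ p ∈ U, pt E p + px F p = 0 := by
  intro p hp
  set KC : EuclideanSpace ℝ (Fin d) →L[ℝ] EuclideanSpace ℝ (Fin d) :=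
    LinearMap.toContinuousLinearMap (Matrix.toEuclideanLin K) with hKCdef
  have hKCapp : ∀ u, KC u = Matrix.toEuclideanLin K u := fun u => rfl
  have hpU : U ∈ nhds p := hU.mem_nhds hp
  have hzdiff : ∀ q ∈ U, DifferentiableAt ℝ z q := fun q hq =>
    (hz.differentiableOn (by norm_num)).differentiableAt (hU.mem_nhds hq)
  have hDzC : ContDiffOn ℝ 1 (fderiv ℝ z) U := hz.fderiv_of_isOpen hU (by norm_num)
  have hDzdiff : DifferentiableAt ℝ (fderiv ℝ z) p :=
    (hDzC.differentiableOn one_ne_zero).differentiableAt hpU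
  set zt := fderiv ℝ z p ((1:ℝ), (0:ℝ)) with hztdef
  set zx := fderiv ℝ z p ((0:ℝ), (1:ℝ)) with hzxdef
  set A := fderiv ℝ (fderiv ℝ z) p with hAdef
  -- pt/px equal directional fderiv on U
  have hptz : ∀ q ∈ U, pt z q = fderiv ℝ z q ((1:ℝ), (0:ℝ)) := by
    intro q hq
    have hc : HasDerivAt (fun s : ℝ => (s, q.2)) ((1:ℝ), (0:ℝ)) q.1 :=
      HasDerivAt.prodMk (hasDerivAt_id q.1) (hasDerivAt_const q.1 q.2)
    exact (((hzdiff q hq).hasFDerivAt).comp_hasDerivAt q.1 hc).deriv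
  have hpxz : ∀ q ∈ U, px z q = fderiv ℝ z q ((0:ℝ), (1:ℝ)) := by
    intro q hq
    have hc : HasDerivAt (fun s : ℝ => (q.1, s)) ((0:ℝ), (1:ℝ)) q.2 :=
      HasDerivAt.prodMk (hasDerivAt_const q.2 q.1) (hasDerivAt_id q.2)
    exact (((hzdiff q hq).hasFDerivAt).comp_hasDerivAt q.2 hc).deriv
  -- compute pt E p
  have hc1 : HasDerivAt (fun s : ℝ => (s, p.2)) ((1:ℝ), (0:ℝ)) p.1 :=
    HasDerivAt.prodMk (hasDerivAt_id p.1) (hasDerivAt_const p.1 p.2)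
  have hz1 : HasDerivAt (fun s => z (s, p.2)) zt p.1 :=
    ((hzdiff p hp).hasFDerivAt).comp_hasDerivAt p.1 hc1
  have hS1 : HasDerivAt (fun s => S (z (s, p.2))) (fderiv ℝ S (z p) zt) p.1 :=
    ((hS.differentiable one_ne_zero (z p)).hasFDerivAt).comp_hasDerivAt p.1 hz1
  have hDz1 : HasDerivAt (fun s => fderiv ℝ z (s, p.2)) (A ((1:ℝ),(0:ℝ))) p.1 :=
    (hDzdiff.hasFDerivAt).comp_hasDerivAt p.1 hc1
  have happ1 : HasDerivAt (fun s => fderiv ℝ z (s, p.2) ((0:ℝ),(1:ℝ)))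
      (A ((1:ℝ),(0:ℝ)) ((0:ℝ),(1:ℝ))) p.1 := by
    simpa using hDz1.clm_apply (hasDerivAt_const p.1 ((0:ℝ),(1:ℝ)))
  have hKz1 : HasDerivAt (fun s => KC (z (s, p.2))) (KC zt) p.1 :=
    (KC.hasFDerivAt).comp_hasDerivAt p.1 hz1
  have hinner1 : HasDerivAt
      (fun s => (inner ℝ (fderiv ℝ z (s, p.2) ((0:ℝ),(1:ℝ))) (KC (z (s, p.2))) : ℝ))
      ((inner ℝ zx (KC zt) : ℝ) + (inner ℝ (A ((1:ℝ),(0:ℝ)) ((0:ℝ),(1:ℝ))) (KC (z p)) : ℝ)) p.1 :=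
    happ1.inner ℝ hKz1
  have hT1 : HasDerivAt (fun s => S (z (s, p.2))
      + (1/2) * (inner ℝ (fderiv ℝ z (s, p.2) ((0:ℝ),(1:ℝ))) (KC (z (s, p.2))) : ℝ))
      (fderiv ℝ S (z p) zt + (1/2) * ((inner ℝ zx (KC zt) : ℝ)
        + (inner ℝ (A ((1:ℝ),(0:ℝ)) ((0:ℝ),(1:ℝ))) (KC (z p)) : ℝ))) p.1 :=
    hS1.add (hinner1.const_mul (1/2))
  have hEev : (fun s => E (s, p.2)) =ᶠ[nhds p.1] (fun s => S (z (s, p.2))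
      + (1/2) * (inner ℝ (fderiv ℝ z (s, p.2) ((0:ℝ),(1:ℝ))) (KC (z (s, p.2))) : ℝ)) := by
    have hcont : ContinuousAt (fun s : ℝ => (s, p.2)) p.1 := by fun_prop
    filter_upwards [hcont.preimage_mem_nhds hpU] with s hs
    rw [hE, hpxz _ hs, hKCapp]
  have hptE : pt E p = fderiv ℝ S (z p) zt + (1/2) * ((inner ℝ zx (KC zt) : ℝ)
      + (inner ℝ (A ((1:ℝ),(0:ℝ)) ((0:ℝ),(1:ℝ))) (KC (z p)) : ℝ)) := by
    rw [pt, hEev.deriv_eq]; exact hT1.deriv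
  -- compute px F p
  have hc2 : HasDerivAt (fun s : ℝ => (p.1, s)) ((0:ℝ), (1:ℝ)) p.2 :=
    HasDerivAt.prodMk (hasDerivAt_const p.2 p.1) (hasDerivAt_id p.2)
  have hz2 : HasDerivAt (fun s => z (p.1, s)) zx p.2 :=
    ((hzdiff p hp).hasFDerivAt).comp_hasDerivAt p.2 hc2
  have hDz2 : HasDerivAt (fun s => fderiv ℝ z (p.1, s)) (A ((0:ℝ),(1:ℝ))) p.2 :=
    (hDzdiff.hasFDerivAt).comp_hasDerivAt p.2 hc2
  have happ2 : HasDerivAt (fun s => fderiv ℝ z (p.1, s) ((1:ℝ),(0:ℝ)))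
      (A ((0:ℝ),(1:ℝ)) ((1:ℝ),(0:ℝ))) p.2 := by
    simpa using hDz2.clm_apply (hasDerivAt_const p.2 ((1:ℝ),(0:ℝ)))
  have hKz2 : HasDerivAt (fun s => KC (z (p.1, s))) (KC zx) p.2 :=
    (KC.hasFDerivAt).comp_hasDerivAt p.2 hz2
  have hinner2 : HasDerivAt
      (fun s => (inner ℝ (fderiv ℝ z (p.1, s) ((1:ℝ),(0:ℝ))) (KC (z (p.1, s))) : ℝ))
      ((inner ℝ zt (KC zx) : ℝ) + (inner ℝ (A ((0:ℝ),(1:ℝ)) ((1:ℝ),(0:ℝ))) (KC (z p)) : ℝ)) p.2 :=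
    happ2.inner ℝ hKz2
  have hT2 : HasDerivAt (fun s => -(1/2)
      * (inner ℝ (fderiv ℝ z (p.1, s) ((1:ℝ),(0:ℝ))) (KC (z (p.1, s))) : ℝ))
      (-(1/2) * ((inner ℝ zt (KC zx) : ℝ)
        + (inner ℝ (A ((0:ℝ),(1:ℝ)) ((1:ℝ),(0:ℝ))) (KC (z p)) : ℝ))) p.2 :=
    hinner2.const_mul (-(1/2))
  have hFev : (fun s => F (p.1, s)) =ᶠ[nhds p.2] (fun s => -(1/2)
      * (inner ℝ (fderiv ℝ z (p.1, s) ((1:ℝ),(0:ℝ))) (KC (z (p.1, s))) : ℝ)) := by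
    have hcont : ContinuousAt (fun s : ℝ => (p.1, s)) p.2 := by fun_prop
    filter_upwards [hcont.preimage_mem_nhds hpU] with s hs
    rw [hF, hptz _ hs, hKCapp]
  have hpxF : px F p = -(1/2) * ((inner ℝ zt (KC zx) : ℝ)
      + (inner ℝ (A ((0:ℝ),(1:ℝ)) ((1:ℝ),(0:ℝ))) (KC (z p)) : ℝ)) := by
    rw [px, hFev.deriv_eq]; exact hT2.deriv
  -- symmetry of second derivative
  have hsym : A ((1:ℝ),(0:ℝ)) ((0:ℝ),(1:ℝ)) = A ((0:ℝ),(1:ℝ)) ((1:ℝ),(0:ℝ)) :=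
    ((hz.contDiffAt hpU).isSymmSndFDerivAt (by norm_num)).eq _ _
  -- gradient vs fderiv
  have hgrad : fderiv ℝ S (z p) zt = (inner ℝ (gradient S (z p)) zt : ℝ) := by
    have h := (hS.differentiable one_ne_zero (z p)).hasGradientAt
    rw [hasGradientAt_iff_hasFDerivAt] at h
    rw [h.fderiv]
    simp [InnerProductSpace.toDual_apply_apply]
  -- multisymplectic equation
  have hgradeq : gradient S (z p)
      = Matrix.toEuclideanLin M zt + Matrix.toEuclideanLin K zx := by
    rw [← heq p hp, hptz p hp, hpxz p hp]
  -- assemble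
  have hMskew : (inner ℝ (Matrix.toEuclideanLin M zt) zt : ℝ) = 0 := by
    have h1 := skew_inner hM zt zt
    have h2 : (inner ℝ zt (Matrix.toEuclideanLin M zt) : ℝ)
        = (inner ℝ (Matrix.toEuclideanLin M zt) zt : ℝ) := real_inner_comm _ _
    linarith [h1, h2.symm ▸ h1]
  have hKskew := skew_inner hK zx zt
  have hcomm : (inner ℝ zt (Matrix.toEuclideanLin K zx) : ℝ)
      = (inner ℝ (Matrix.toEuclideanLin K zx) zt : ℝ) := real_inner_comm _ _
  rw [hptE, hpxF, hgrad, hgradeq, hsym]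
  simp only [hKCapp, inner_add_left]
  rw [hMskew]
  linarith [hKskew, hcomm]
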